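/- Let τ > 0, α > 0, l > 0, K = [k₁,k₂,k₃] with k₁,k₂,k₃ real, A = [[0,1,0],[0,0,1],[0,0,-1/τ]], B = [0,0,1/τ]^T, and L = α B^T. Then the characteristic polynomial of A - BK - l·B L equals (1/τ)(τ s³ + (1 + k₃ + lα/τ) s² + k₂ s + k₁). Consequently, if τ s³ + (1+k₃) s² + k₂ s + k₁ is a Hurwitz polynomial (all coefficients positive and (1+k₃)k₂ > τ k₁), then A - BK - l·B L is also Hurwitz for every l > 0. -/

import Mathlib

open Matrix Polynomial

private lemma cubic_root_re_neg (τ a k₂ k₁ : ℝ) (h1 : 0 < τ) (ha : 0 < a) (h3 : 0 < k₂)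
    (h4 : 0 < k₁) (h5 : τ * k₁ < a * k₂) (μ : ℂ)
    (hz : (τ:ℂ)*μ^3 + (a:ℂ)*μ^2 + (k₂:ℂ)*μ + (k₁:ℂ) = 0) : μ.re < 0 := by
  obtain ⟨x, y⟩ := μ
  simp only [Complex.ext_iff, Complex.add_re, Complex.add_im, Complex.mul_re, Complex.mul_im,
    Complex.ofReal_re, Complex.ofReal_im, Complex.zero_re, Complex.zero_im,
    pow_succ, pow_zero, one_mul, Complex.one_re, Complex.one_im] at hz
  obtain ⟨hre, him⟩ := hz
  show x < 0
  by_contra hx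
  push_neg at hx
  rcases eq_or_ne y 0 with hy | hy
  · subst hy
    have hre' : τ*x^3 + a*x^2 + k₂*x + k₁ = 0 := by linear_combination hre
    nlinarith [mul_nonneg (pow_nonneg hx 3) h1.le, mul_nonneg (pow_nonneg hx 2) ha.le,
      mul_nonneg hx h3.le]
  · have hb : τ*(3*x^2 - y^2) + 2*a*x + k₂ = 0 := by
      apply mul_left_cancel₀ hy
      linear_combination him
    have hre' : τ*(x^3 - 3*x*y^2) + a*(x^2 - y^2) + k₂*x + k₁ = 0 := by
      linear_combination hre
    have key : 4*τ^2*x^3 + 4*a*τ*x^2 + (k₂*τ + a^2)*x + (a*k₂ - k₁*τ)/2 = 0 := by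
      linear_combination (-(τ/2))*hre' + ((3*τ*x + a)/2)*hb
    nlinarith [mul_nonneg (pow_nonneg hx 3) (sq_nonneg τ),
      mul_nonneg (pow_nonneg hx 2) (mul_pos ha h1).le,
      mul_nonneg hx (by positivity : (0:ℝ) ≤ k₂*τ + a^2)]

theorem observer_closed_loop_Hurwitz (τ α l : ℝ) (hτ : 0 < τ) (hα : 0 < α)
    (hl : 0 < l) (k₁ k₂ k₃ : ℝ)
    (A : Matrix (Fin 3) (Fin 3) ℝ) (B : Matrix (Fin 3) (Fin 1) ℝ)
    (K L : Matrix (Fin 1) (Fin 3) ℝ)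
    (hA : A = !![0, 1, 0; 0, 0, 1; 0, 0, -1/τ])
    (hB : B = !![0; 0; 1/τ])
    (hK : K = !![k₁, k₂, k₃])
    (hL : L = α • Bᵀ) :
    (A - B * K - l • (B * L)).charpoly =
      Polynomial.C (1/τ) *
        (Polynomial.C τ * X ^ 3 + Polynomial.C (1 + k₃ + l * α / τ) * X ^ 2
          + Polynomial.C k₂ * X + Polynomial.C k₁) ∧
    ((0 < τ ∧ 0 < 1 + k₃ ∧ 0 < k₂ ∧ 0 < k₁ ∧ (1 + k₃) * k₂ > τ * k₁) →
      ∀ μ : ℂ, ((A - B * K - l • (B * L)).map (algebraMap ℝ ℂ)).charpoly.IsRoot μ →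
        μ.re < 0) := by
  have h : (τ : ℝ) ≠ 0 := ne_of_gt hτ
  subst hL hK hB hA
  have hM : (!![0, 1, 0; 0, 0, 1; 0, 0, -1/τ] - !![0; 0; 1/τ] * !![k₁, k₂, k₃]
      - l • (!![0; 0; 1/τ] * (α • (!![0; 0; (1:ℝ)/τ])ᵀ))) =
      !![0, 1, 0; 0, 0, 1; -k₁/τ, -k₂/τ, -1/τ - k₃/τ - l*α/τ^2] := by
    ext i j; fin_cases i <;> fin_cases j <;>
      simp [Matrix.mul_apply, Fin.sum_univ_succ, Matrix.vecHead, Matrix.vecTail,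
        Pi.smul_apply, smul_eq_mul, Matrix.vecMul, dotProduct] <;> ring
  have hchar : (!![0, 1, 0; 0, 0, 1; 0, 0, -1/τ] - !![0; 0; 1/τ] * !![k₁, k₂, k₃]
      - l • (!![0; 0; 1/τ] * (α • (!![0; 0; (1:ℝ)/τ])ᵀ))).charpoly =
      Polynomial.C (1/τ) *
        (Polynomial.C τ * X ^ 3 + Polynomial.C (1 + k₃ + l * α / τ) * X ^ 2
          + Polynomial.C k₂ * X + Polynomial.C k₁) := by
    rw [hM, Matrix.charpoly, Matrix.det_fin_three]
    apply Polynomial.funext; intro x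
    simp [charmatrix_apply, diagonal_apply]
    field_simp
    ring
  refine ⟨hchar, ?_⟩
  rintro ⟨h1, h2, h3, h4, h5⟩ μ hroot
  rw [Matrix.charpoly_map, hchar] at hroot
  set a : ℝ := 1 + k₃ + l * α / τ with ha_def
  have ha : 0 < a := by
    rw [ha_def]; positivity
  have h5' : τ * k₁ < a * k₂ := by
    rw [ha_def]
    have : 0 < (l * α / τ) * k₂ := by positivity
    nlinarith
  have hz : (τ:ℂ)*μ^3 + (a:ℂ)*μ^2 + (k₂:ℂ)*μ + (k₁:ℂ) = 0 := by
    have h' := hroot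
    simp only [IsRoot, Polynomial.map_mul, Polynomial.map_add, Polynomial.map_pow,
      Polynomial.map_C, Polynomial.map_X, eval_mul, eval_add, eval_pow, eval_C, eval_X] at h'
    have hne : (algebraMap ℝ ℂ) (1/τ) ≠ 0 := by
      simp [h]
    have h'' := (mul_eq_zero.mp h').resolve_left hne
    rw [← h'']
    push_cast [Complex.coe_algebraMap]
    ring
  exact cubic_root_re_neg τ a k₂ k₁ h1 ha h3 h4 h5' μ hz
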